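/- For a binary treatment under consistency and ignorability, with a nonnegative discrete outcome, both the weighted sum of marginal probabilities of causation and the absolute natural total effect dominate the difference of conditional means: min{ Σ_{y ∈ L} y · P(Y₀ ≠ y and Y₁ = y), |E[Y₁] − E[Y₀]| } ≥ E[Y | Z = z] − E[Y | Z ≠ z], for each z ∈ {0, 1}, where Y₁ and Y₀ are the potential outcomes corresponding to Z = z and Z ≠ z respectively. -/

import Mathlib

open MeasureTheory ProbabilityTheory

private lemma setIntegral_eq_sum_aux {Ω : Type*} [MeasurableSpace Ω]
    (μ : Measure Ω) [IsFiniteMeasure μ] (L : Finset ℝ) (W : Ω → ℝ)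
    (hWm : Measurable W) (hWL : ∀ ω, W ω ∈ L) (A : Set Ω) (hA : MeasurableSet A) :
    ∫ ω in A, W ω ∂μ = ∑ y ∈ L, y * (μ ({ω | W ω = y} ∩ A)).toReal := by
  have hrepr : ∀ ω, W ω = ∑ y ∈ L, Set.indicator {ω' | W ω' = y} (fun _ => y) ω := by
    intro ω
    rw [Finset.sum_eq_single (W ω)]
    · simp [Set.indicator_of_mem, Set.mem_setOf_eq]
    · intro y _ hy
      exact Set.indicator_of_notMem (fun h => hy ((Set.mem_setOf_eq ▸ h).symm)) _
    · intro h; exact absurd (hWL ω) h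
  have hmeas : ∀ y : ℝ, MeasurableSet {ω | W ω = y} := fun y =>
    hWm (measurableSet_singleton y)
  calc ∫ ω in A, W ω ∂μ
      = ∫ ω in A, (∑ y ∈ L, Set.indicator {ω' | W ω' = y} (fun _ => y) ω) ∂μ := by
        exact integral_congr_ae (Filter.Eventually.of_forall fun ω => hrepr ω)
    _ = ∑ y ∈ L, ∫ ω in A, Set.indicator {ω' | W ω' = y} (fun _ => y) ω ∂μ := by
        refine integral_finset_sum _ fun y _ => ?_
        exact (IntegrableOn.integrable_indicator (integrableOn_const (measure_lt_top _ _).ne) (hmeas y)).integrableOn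
    _ = ∑ y ∈ L, y * (μ ({ω | W ω = y} ∩ A)).toReal := by
        refine Finset.sum_congr rfl fun y _ => ?_
        rw [setIntegral_indicator (hmeas y), setIntegral_const, smul_eq_mul, mul_comm, Set.inter_comm, Measure.real]

private lemma cond_integral_eq_aux {Ω : Type*} [MeasurableSpace Ω]
    (μ : Measure Ω) [IsProbabilityMeasure μ] (L : Finset ℝ) (W : Ω → ℝ)
    (hWm : Measurable W) (hWL : ∀ ω, W ω ∈ L) (A : Set Ω) (hA : MeasurableSet A)
    (hpos : μ A ≠ 0)
    (hind : ∀ y ∈ L, μ ({ω | W ω = y} ∩ A) = μ {ω | W ω = y} * μ A)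
    (V : Ω → ℝ) (hVeq : ∀ ω ∈ A, V ω = W ω) :
    ∫ ω, V ω ∂(μ[|A]) = ∫ ω, W ω ∂μ := by
  have hAfin : μ A ≠ ⊤ := (measure_lt_top μ A).ne
  have h1 : ∫ ω, V ω ∂(μ[|A]) = ((μ A)⁻¹).toReal * ∫ ω in A, V ω ∂μ := by
    rw [ProbabilityTheory.cond, integral_smul_measure, smul_eq_mul]
  rw [h1, setIntegral_congr_fun hA (fun ω hω => hVeq ω hω),
    setIntegral_eq_sum_aux μ L W hWm hWL A hA]
  have h2 : ∫ ω, W ω ∂μ = ∑ y ∈ L, y * (μ {ω | W ω = y}).toReal := by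
    have := setIntegral_eq_sum_aux μ L W hWm hWL Set.univ MeasurableSet.univ
    simpa using this
  rw [h2, Finset.mul_sum]
  refine Finset.sum_congr rfl fun y hy => ?_
  rw [hind y hy, ENNReal.toReal_mul, ENNReal.toReal_inv]
  have hAne : (μ A).toReal ≠ 0 := by
    simp [ENNReal.toReal_eq_zero_iff, hpos, hAfin]
  field_simp

/-- For a binary treatment under consistency and ignorability, with a nonnegative
discrete outcome, both the weighted sum of marginal probabilities of causation and the
absolute natural total effect dominate the difference of conditional means:
`min{ Σ_{y ∈ L} y · P(Y₀ ≠ y ∧ Y₁ = y), |E[Y₁] − E[Y₀]| } ≥ E[Y | Z = z] − E[Y | Z ≠ z]`. -/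
theorem binary_mpoc_and_total_effect_ge_conditional_mean_difference
    {Ω : Type*} [MeasurableSpace Ω]
    (μ : Measure Ω) [IsProbabilityMeasure μ]
    (L : Finset ℝ) (hL : ∀ x ∈ L, 0 ≤ x)
    (Z : Ω → Fin 2) (z : Fin 2)
    (Y Y1 Y0 : Ω → ℝ)
    (hYm : Measurable Y) (hY1m : Measurable Y1) (hY0m : Measurable Y0)
    (hYL : ∀ ω, Y ω ∈ L) (hY1L : ∀ ω, Y1 ω ∈ L) (hY0L : ∀ ω, Y0 ω ∈ L)
    (hmZ : MeasurableSet {ω | Z ω = z})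
    (hpos : 0 < μ {ω | Z ω = z}) (hlt : μ {ω | Z ω = z} < 1)
    (hcons1 : ∀ ω, Z ω = z → Y ω = Y1 ω)
    (hcons0 : ∀ ω, Z ω ≠ z → Y ω = Y0 ω)
    (hind1 : ∀ y' ∈ L,
      μ ({ω | Y1 ω = y'} ∩ {ω | Z ω = z}) = μ {ω | Y1 ω = y'} * μ {ω | Z ω = z})
    (hind0 : ∀ y' ∈ L,
      μ ({ω | Y0 ω = y'} ∩ {ω | Z ω = z}) = μ {ω | Y0 ω = y'} * μ {ω | Z ω = z}) :
    (∫ ω, Y ω ∂(μ[|{ω | Z ω = z}])) - (∫ ω, Y ω ∂(μ[|{ω | Z ω ≠ z}]))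
      ≤ min (∑ y ∈ L, y * (μ {ω | Y0 ω ≠ y ∧ Y1 ω = y}).toReal)
          |(∫ ω, Y1 ω ∂μ) - (∫ ω, Y0 ω ∂μ)| := by
  set A : Set Ω := {ω | Z ω = z} with hAdef
  have hAc : {ω | Z ω ≠ z} = Aᶜ := rfl
  -- conditional expectation given Z = z equals E[Y1]
  have hE1 : ∫ ω, Y ω ∂(μ[|A]) = ∫ ω, Y1 ω ∂μ :=
    cond_integral_eq_aux μ L Y1 hY1m hY1L A hmZ hpos.ne' hind1 Y
      (fun ω hω => hcons1 ω hω)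
  -- independence on the complement
  have hcompl : μ Aᶜ = 1 - μ A := prob_compl_eq_one_sub hmZ
  have hposc : μ Aᶜ ≠ 0 := by
    rw [hcompl]
    exact (tsub_pos_of_lt hlt).ne'
  have hind0c : ∀ y ∈ L, μ ({ω | Y0 ω = y} ∩ Aᶜ) = μ {ω | Y0 ω = y} * μ Aᶜ := by
    intro y hy
    have hsplit : μ ({ω | Y0 ω = y} ∩ A) + μ ({ω | Y0 ω = y} \ A) = μ {ω | Y0 ω = y} :=
      measure_inter_add_diff _ hmZ
    have hdif : {ω | Y0 ω = y} \ A = {ω | Y0 ω = y} ∩ Aᶜ := rfl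
    rw [hdif] at hsplit
    have key : μ ({ω | Y0 ω = y} ∩ A) + μ ({ω | Y0 ω = y} ∩ Aᶜ)
        = μ ({ω | Y0 ω = y} ∩ A) + μ {ω | Y0 ω = y} * μ Aᶜ := by
      rw [hsplit, hind0 y hy, hcompl, ← mul_add, add_tsub_cancel_of_le hlt.le, mul_one]
    have hfin : μ ({ω | Y0 ω = y} ∩ A) ≠ ⊤ := (measure_lt_top _ _).ne
    exact (ENNReal.add_right_inj hfin).1 key
  have hE0 : ∫ ω, Y ω ∂(μ[|Aᶜ]) = ∫ ω, Y0 ω ∂μ :=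
    cond_integral_eq_aux μ L Y0 hY0m hY0L Aᶜ hmZ.compl hposc hind0c Y
      (fun ω hω => hcons0 ω hω)
  rw [hAc, hE1, hE0]
  refine le_min ?_ (le_abs_self _)
  -- E[Y1] - E[Y0] ≤ Σ y μ(Y0 ≠ y ∧ Y1 = y)
  have hI1 : ∫ ω, Y1 ω ∂μ = ∑ y ∈ L, y * (μ {ω | Y1 ω = y}).toReal := by
    simpa using setIntegral_eq_sum_aux μ L Y1 hY1m hY1L Set.univ MeasurableSet.univ
  have hI0 : ∫ ω, Y0 ω ∂μ = ∑ y ∈ L, y * (μ {ω | Y0 ω = y}).toReal := by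
    simpa using setIntegral_eq_sum_aux μ L Y0 hY0m hY0L Set.univ MeasurableSet.univ
  rw [hI1, hI0, ← Finset.sum_sub_distrib]
  refine Finset.sum_le_sum fun y hy => ?_
  rw [← mul_sub]
  refine mul_le_mul_of_nonneg_left ?_ (hL y hy)
  have hm0 : MeasurableSet {ω | Y0 ω = y} := hY0m (measurableSet_singleton y)
  have hsplit : μ ({ω | Y1 ω = y} ∩ {ω | Y0 ω = y}) + μ ({ω | Y1 ω = y} \ {ω | Y0 ω = y})
      = μ {ω | Y1 ω = y} := measure_inter_add_diff _ hm0
  have hset : {ω | Y1 ω = y} \ {ω | Y0 ω = y} = {ω | Y0 ω ≠ y ∧ Y1 ω = y} := by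
    ext ω; simp [Set.mem_diff, and_comm]
  have hle0 : μ ({ω | Y1 ω = y} ∩ {ω | Y0 ω = y}) ≤ μ {ω | Y0 ω = y} :=
    measure_mono Set.inter_subset_right
  have h1 : (μ {ω | Y1 ω = y}).toReal
      = (μ ({ω | Y1 ω = y} ∩ {ω | Y0 ω = y})).toReal + (μ {ω | Y0 ω ≠ y ∧ Y1 ω = y}).toReal := by
    rw [← hset, ← ENNReal.toReal_add (measure_lt_top _ _).ne (measure_lt_top _ _).ne, hsplit]
  have h2 : (μ ({ω | Y1 ω = y} ∩ {ω | Y0 ω = y})).toReal ≤ (μ {ω | Y0 ω = y}).toReal :=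
    ENNReal.toReal_mono (measure_lt_top _ _).ne hle0
  linarith
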